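/- Let $S$ be a commutative ring. Two matrices $A, B \in M_2(S)$ generate $M_2(S)$ as an $S$-algebra if and only if $\det(AB - BA)$ is a unit in $S$. -/

import Mathlib

open Matrix Submodule

private def phi4 {S : Type*} [CommRing S] :
    Matrix (Fin 2) (Fin 2) S ≃ₗ[S] (Fin 4 → S) where
  toFun X := ![X 0 0, X 0 1, X 1 0, X 1 1]
  map_add' X Y := by funext i; fin_cases i <;> simp
  map_smul' c X := by funext i; fin_cases i <;> simp
  invFun y := !![y 0, y 1; y 2, y 3]
  left_inv X := by ext i j; fin_cases i <;> fin_cases j <;> simp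
  right_inv y := by funext i; fin_cases i <;> simp

private lemma hCH {S : Type*} [CommRing S] (A : Matrix (Fin 2) (Fin 2) S) :
    A * A = A.trace • A - A.det • (1 : Matrix (Fin 2) (Fin 2) S) := by
  ext i j
  fin_cases i <;> fin_cases j <;>
    simp [Matrix.mul_apply, Fin.sum_univ_two, Matrix.trace, Matrix.diag,
      Matrix.det_fin_two, Matrix.one_apply] <;> ring

private lemma hBAeq {S : Type*} [CommRing S] (A B : Matrix (Fin 2) (Fin 2) S) :
    B * A = A.trace • B + B.trace • A
      + ((A * B).trace - A.trace * B.trace) • (1 : Matrix (Fin 2) (Fin 2) S) - A * B := by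
  ext i j
  fin_cases i <;> fin_cases j <;>
    simp [Matrix.mul_apply, Fin.sum_univ_two, Matrix.trace, Matrix.diag,
      Matrix.one_apply] <;> ring

theorem stmt_15 {S : Type*} [CommRing S] (A B : Matrix (Fin 2) (Fin 2) S) :
    Algebra.adjoin S {A, B} = ⊤ ↔ IsUnit (A * B - B * A).det := by
  set s : Set (Matrix (Fin 2) (Fin 2) S) := {1, A, B, A * B} with hs
  set P : Submodule S (Matrix (Fin 2) (Fin 2) S) := Submodule.span S s with hP
  have h1 : (1 : Matrix (Fin 2) (Fin 2) S) ∈ P := subset_span (by simp [hs])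
  have hA : A ∈ P := subset_span (by simp [hs])
  have hB : B ∈ P := subset_span (by simp [hs])
  have hAB : A * B ∈ P := subset_span (by simp [hs])
  have hBB : B * B ∈ P := by
    rw [hCH]; exact sub_mem (P.smul_mem _ hB) (P.smul_mem _ h1)
  have hAA : A * A ∈ P := by
    rw [hCH]; exact sub_mem (P.smul_mem _ hA) (P.smul_mem _ h1)
  have hBAmem : B * A ∈ P := by
    rw [hBAeq]
    exact sub_mem (add_mem (add_mem (P.smul_mem _ hB) (P.smul_mem _ hA))
      (P.smul_mem _ h1)) hAB
  have hmulB : ∀ x ∈ P, x * B ∈ P := by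
    intro x hx
    induction hx using Submodule.span_induction with
    | mem x hx =>
      simp only [hs, Set.mem_insert_iff, Set.mem_singleton_iff] at hx
      rcases hx with rfl | rfl | rfl | rfl
      · simpa using hB
      · exact hAB
      · exact hBB
      · rw [mul_assoc, hCH B, mul_sub, mul_smul_comm, mul_smul_comm, mul_one]
        exact sub_mem (P.smul_mem _ hAB) (P.smul_mem _ hA)
    | zero => simpa using P.zero_mem
    | add x y _ _ hx hy => rw [add_mul]; exact P.add_mem hx hy
    | smul c x _ hx => rw [smul_mul_assoc]; exact P.smul_mem c hx
  have hmulAl : ∀ x ∈ P, A * x ∈ P := by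
    intro x hx
    induction hx using Submodule.span_induction with
    | mem x hx =>
      simp only [hs, Set.mem_insert_iff, Set.mem_singleton_iff] at hx
      rcases hx with rfl | rfl | rfl | rfl
      · simpa using hA
      · exact hAA
      · exact hAB
      · rw [← mul_assoc]; exact hmulB _ hAA
    | zero => simpa using P.zero_mem
    | add x y _ _ hx hy => rw [mul_add]; exact P.add_mem hx hy
    | smul c x _ hx => rw [mul_smul_comm]; exact P.smul_mem c hx
  have hmulBl : ∀ x ∈ P, B * x ∈ P := by
    intro x hx
    induction hx using Submodule.span_induction with
    | mem x hx =>
      simp only [hs, Set.mem_insert_iff, Set.mem_singleton_iff] at hx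
      rcases hx with rfl | rfl | rfl | rfl
      · simpa using hB
      · exact hBAmem
      · exact hBB
      · rw [← mul_assoc]; exact hmulB _ hBAmem
    | zero => simpa using P.zero_mem
    | add x y _ _ hx hy => rw [mul_add]; exact P.add_mem hx hy
    | smul c x _ hx => rw [mul_smul_comm]; exact P.smul_mem c hx
  have hmul : ∀ x y : Matrix (Fin 2) (Fin 2) S, x ∈ P → y ∈ P → x * y ∈ P := by
    intro x y hx hy
    induction hx using Submodule.span_induction with
    | mem x hx =>
      simp only [hs, Set.mem_insert_iff, Set.mem_singleton_iff] at hx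
      rcases hx with rfl | rfl | rfl | rfl
      · simpa using hy
      · exact hmulAl _ hy
      · exact hmulBl _ hy
      · rw [mul_assoc]; exact hmulAl _ (hmulBl _ hy)
    | zero => simpa using P.zero_mem
    | add x y _ _ hx hy => rw [add_mul]; exact P.add_mem hx hy
    | smul c x _ hx => rw [smul_mul_assoc]; exact P.smul_mem c hx
  -- the adjoin equals the span
  have key : Subalgebra.toSubmodule (Algebra.adjoin S {A, B}) = P := by
    apply le_antisymm
    · have hle : Algebra.adjoin S {A, B} ≤ P.toSubalgebra h1 hmul := by
        apply Algebra.adjoin_le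
        intro x hx
        rcases hx with rfl | rfl
        · exact hA
        · exact hB
      intro x hx
      exact hle hx
    · rw [hP]
      apply span_le.2
      intro x hx
      simp only [hs, Set.mem_insert_iff, Set.mem_singleton_iff] at hx
      rcases hx with rfl | rfl | rfl | rfl
      · exact (Algebra.adjoin S {A, B}).one_mem
      · exact Algebra.subset_adjoin (by simp)
      · exact Algebra.subset_adjoin (by simp)
      · exact (Algebra.adjoin S {A, B}).mul_mem
          (Algebra.subset_adjoin (by simp)) (Algebra.subset_adjoin (by simp))
  rw [← Algebra.toSubmodule_eq_top, key]
  -- now relate the span condition to the determinant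
  set M : Matrix (Fin 4) (Fin 4) S :=
    Matrix.of ![phi4 1, phi4 A, phi4 B, phi4 (A * B)] with hM
  have hrange : Set.range (M : Fin 4 → (Fin 4 → S)) = ⇑phi4 '' s := by
    ext u
    constructor
    · rintro ⟨i, rfl⟩
      fin_cases i
      · exact ⟨1, by simp [hs], rfl⟩
      · exact ⟨A, by simp [hs], rfl⟩
      · exact ⟨B, by simp [hs], rfl⟩
      · exact ⟨A * B, by simp [hs], rfl⟩
    · rintro ⟨x, hx, rfl⟩
      simp only [hs, Set.mem_insert_iff, Set.mem_singleton_iff] at hx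
      rcases hx with rfl | rfl | rfl | rfl
      · exact ⟨0, rfl⟩
      · exact ⟨1, rfl⟩
      · exact ⟨2, rfl⟩
      · exact ⟨3, rfl⟩
  have hspan : P = ⊤ ↔ IsUnit M := by
    rw [← Matrix.vecMul_surjective_iff_isUnit, ← Matrix.coe_vecMulLinear,
      ← LinearMap.range_eq_top, range_vecMulLinear,
      show Set.range M.row = Set.range (M : Fin 4 → (Fin 4 → S)) from rfl, hrange,
      show ⇑phi4 '' s =
        ⇑((phi4 : Matrix (Fin 2) (Fin 2) S ≃ₗ[S] (Fin 4 → S)).toLinearMap) '' s from rfl,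
      ← Submodule.map_span, ← hP]
    constructor
    · intro h; rw [h, Submodule.map_top]; exact LinearEquiv.range phi4
    · intro h
      have htop : Submodule.map
          ((phi4 : Matrix (Fin 2) (Fin 2) S ≃ₗ[S] (Fin 4 → S)).toLinearMap)
          (⊤ : Submodule S (Matrix (Fin 2) (Fin 2) S)) = ⊤ := by
        rw [Submodule.map_top]; exact LinearEquiv.range phi4
      exact Submodule.map_injective_of_injective
        (f := (phi4 : Matrix (Fin 2) (Fin 2) S ≃ₗ[S] (Fin 4 → S)).toLinearMap)
        phi4.injective (h.trans htop.symm)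
  have hdet : M.det = (A * B - B * A).det := by
    simp only [hM, phi4, LinearEquiv.coe_mk]
    rw [Matrix.det_fin_two]
    simp [Matrix.det_succ_row_zero, Fin.sum_univ_succ, Matrix.mul_apply,
      Fin.sum_univ_two, Matrix.one_apply, Matrix.cons_val_two, Matrix.cons_val_three,
      Matrix.vecHead, Matrix.vecTail, Fin.succAbove,
      show (Fin.castSucc 2 : Fin 4) = 2 from rfl]
    ring
  rw [hspan, Matrix.isUnit_iff_isUnit_det, hdet]
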